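/- arXiv:1504.05115 — 4 statements merged into one kernel-verified Lean document; each statement's English description precedes it below -/
import Mathlib

section
/- Let f : ℝ → ℝ be twice continuously differentiable on [0,∞) with f(0) = 0, f'(0) = 0, and f(t) → 1 as t → ∞. Then the transition energy of f satisfies ∫₀^∞ ((f(t)−1)² + (f''(t))²) dt ≥ √2. -/
open MeasureTheory Filter


/-- FTC on `[a,b] ⊆ [0,∞)` for derivatives within `Ici 0`. -/
lemma ftc_Ici {u u' : ℝ → ℝ}
    (hu : ∀ t ∈ Set.Ici (0:ℝ), HasDerivWithinAt u (u' t) (Set.Ici 0) t)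
    (hu' : ContinuousOn u' (Set.Ici 0)) {a b : ℝ} (ha : 0 ≤ a) (hab : a ≤ b) :
    ∫ t in a..b, u' t = u b - u a := by
  have hsub : Set.Icc a b ⊆ Set.Ici (0:ℝ) := fun x hx => le_trans ha hx.1
  apply intervalIntegral.integral_eq_sub_of_hasDeriv_right_of_le hab
  · exact ContinuousOn.mono (fun t ht => (hu t ht).continuousWithinAt) hsub
  · intro x hx
    have hx0 : (0:ℝ) ≤ x := le_trans ha hx.1.le
    exact (hu x hx0).mono (fun y hy => le_trans hx0 (le_of_lt hy))
  · apply ContinuousOn.intervalIntegrable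
    apply hu'.mono
    rw [Set.uIcc_of_le hab]
    exact hsub

/-- A function whose derivative is `≥ ε > 0` on `[A,∞)` cannot tend to a finite limit. -/
lemma no_limit_of_deriv_ge {u g : ℝ → ℝ} {A ε : ℝ} (hε : 0 < ε) (hA : 0 ≤ A)
    (hu : ∀ t ∈ Set.Ici (0:ℝ), HasDerivWithinAt u (g t) (Set.Ici 0) t)
    (hg : ContinuousOn g (Set.Ici 0))
    (hpos : ∀ t, A ≤ t → ε ≤ g t)
    {C : ℝ} (hbdd : ∀ᶠ t in atTop, u t ≤ C) : False := by
  obtain ⟨B, hB⟩ := eventually_atTop.mp hbdd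
  obtain ⟨T, hT⟩ : ∃ T, T = max B (max A ((C - u A)/ε + A)) + 1 := ⟨_, rfl⟩
  have hTA : A ≤ T := by
    have : A ≤ max B (max A ((C - u A)/ε + A)) := le_max_of_le_right (le_max_left _ _)
    rw [hT]; linarith
  have hTB : B ≤ T := by
    have := le_max_left B (max A ((C - u A)/ε + A)); rw [hT]; linarith
  have hTC : (C - u A)/ε + A < T := by
    have : (C - u A)/ε + A ≤ max B (max A ((C - u A)/ε + A)) :=
      le_max_of_le_right (le_max_right _ _)
    rw [hT]; linarith
  have hint : ∫ t in A..T, g t = u T - u A := ftc_Ici hu hg hA hTA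
  have hlow : ε * (T - A) ≤ ∫ t in A..T, g t := by
    have h1 : ∫ t in A..T, (ε:ℝ) ≤ ∫ t in A..T, g t := by
      apply intervalIntegral.integral_mono_on hTA intervalIntegrable_const
      · apply ContinuousOn.intervalIntegrable
        apply hg.mono
        rw [Set.uIcc_of_le hTA]
        exact fun x hx => le_trans hA hx.1
      · exact fun x hx => hpos x hx.1
    simpa [mul_comm] using h1
  have hCT : u T ≤ C := hB T hTB
  have : C - u A < ε * (T - A) := by
    have := (div_lt_iff₀ hε).mp (by linarith : (C - u A)/ε < T - A)
    linarith
  linarith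


/-- A continuous derivative of a function tending to a limit gets small infinitely often. -/
lemma small_deriv {f g : ℝ → ℝ}
    (hu : ∀ t ∈ Set.Ici (0:ℝ), HasDerivWithinAt f (g t) (Set.Ici 0) t)
    (hg : ContinuousOn g (Set.Ici 0)) (hlim : Tendsto f atTop (nhds 1))
    {δ A : ℝ} (hδ : 0 < δ) (hA : 0 ≤ A) : ∃ T, A ≤ T ∧ |g T| ≤ δ := by
  by_contra hc
  push_neg at hc
  have hzero : ∀ t, A ≤ t → g t ≠ 0 := by
    intro t ht h0
    have := hc t ht
    rw [h0] at this; simp at this; linarith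
  rcases lt_or_gt_of_ne (hzero A le_rfl) with hsgn | hsgn
  · -- g A < 0 : show g t ≤ -δ for all t ≥ A
    have hneg : ∀ t, A ≤ t → δ ≤ -(g t) := by
      intro t ht
      by_contra hcon
      push_neg at hcon
      have habs := hc t ht
      have hgt : 0 < g t := by
        rcases lt_or_ge 0 (g t) with h | h
        · exact h
        · exfalso; rw [abs_of_nonpos h] at habs; linarith
      have h0mem : (0:ℝ) ∈ Set.Icc (g A) (g t) := ⟨le_of_lt hsgn, le_of_lt hgt⟩
      obtain ⟨c, hc1, hc2⟩ := intermediate_value_Icc ht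
        (hg.mono (fun x hx => le_trans hA hx.1)) h0mem
      have := hc c hc1.1
      rw [hc2] at this; simp at this; linarith
    exact no_limit_of_deriv_ge hδ hA (fun t ht => (hu t ht).neg) hg.neg hneg
      ((hlim.eventually (eventually_ge_nhds (by norm_num : (0:ℝ) < 1))).mono
        (fun t ht => by simpa using neg_nonpos.mpr ht) : ∀ᶠ t in atTop, -f t ≤ 0)
  · -- g A > 0
    have hpos : ∀ t, A ≤ t → δ ≤ g t := by
      intro t ht
      by_contra hcon
      push_neg at hcon
      have habs := hc t ht
      have hgt : g t < 0 := by
        rcases lt_or_ge (g t) 0 with h | h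
        · exact h
        · exfalso; rw [abs_of_nonneg h] at habs; linarith
      have h0mem : (0:ℝ) ∈ Set.Icc (g t) (g A) := ⟨le_of_lt hgt, le_of_lt hsgn⟩
      obtain ⟨c, hc1, hc2⟩ := intermediate_value_Icc' ht
        (hg.mono (fun x hx => le_trans hA hx.1)) h0mem
      have := hc c hc1.1
      rw [hc2] at this; simp at this; linarith
    exact no_limit_of_deriv_ge hδ hA hu hg hpos
      (hlim.eventually (eventually_le_nhds (by norm_num : (1:ℝ) < 2)))



/-- The one-dimensional optimal-profile lower bound: any C² transition profile on
`[0,∞)` from `0` (with zero derivative) to `1` at infinity has transition energy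
`∫₀^∞ ((f-1)² + (f'')²) ≥ √2`.  The (possibly infinite) integral is expressed as a
Lebesgue lower integral. -/
theorem optimal_profile_lower_bound (f : ℝ → ℝ)
    (hf : ContDiffOn ℝ 2 f (Set.Ici 0))
    (h0 : f 0 = 0)
    (h0' : derivWithin f (Set.Ici 0) 0 = 0)
    (hlim : Tendsto f atTop (nhds 1)) :
    ENNReal.ofReal (Real.sqrt 2) ≤
      ∫⁻ t in Set.Ioi (0 : ℝ),
        ENNReal.ofReal
          ((f t - 1) ^ 2 +
            (derivWithin (derivWithin f (Set.Ici 0)) (Set.Ici 0) t) ^ 2) := by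
  set g := derivWithin f (Set.Ici 0) with hgdef
  set h := derivWithin g (Set.Ici 0) with hhdef
  have huniq : UniqueDiffOn ℝ (Set.Ici (0:ℝ)) := uniqueDiffOn_Ici 0
  have hg1 : ContDiffOn ℝ 1 g (Set.Ici 0) := hf.derivWithin huniq (by norm_num)
  have hdf : ∀ t ∈ Set.Ici (0:ℝ), HasDerivWithinAt f (g t) (Set.Ici 0) t :=
    fun t ht => (hf.differentiableOn (by norm_num) t ht).hasDerivWithinAt
  have hdg : ∀ t ∈ Set.Ici (0:ℝ), HasDerivWithinAt g (h t) (Set.Ici 0) t :=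
    fun t ht => (hg1.differentiableOn (by norm_num) t ht).hasDerivWithinAt
  have hcg : ContinuousOn g (Set.Ici 0) := hg1.continuousOn
  have hch : ContinuousOn h (Set.Ici 0) := hg1.continuousOn_derivWithin huniq le_rfl
  have hcf : ContinuousOn f (Set.Ici 0) := hf.continuousOn
  have hs2 : Real.sqrt 2 * Real.sqrt 2 = 2 := Real.mul_self_sqrt (by norm_num)
  have hs2nn : 0 ≤ Real.sqrt 2 := Real.sqrt_nonneg 2
  have hs2le : Real.sqrt 2 ≤ 2 := by nlinarith
  set E : ℝ → ℝ := fun t => (f t - 1)^2 + (h t)^2 with hE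
  set S : ℝ → ℝ := fun t => ((f t - 1) + Real.sqrt 2 * g t + h t)^2 with hS
  set Ψ : ℝ → ℝ := fun t =>
    -(Real.sqrt 2) * (f t - 1)^2 - 2*(f t - 1)*(g t) - Real.sqrt 2 * (g t)^2 with hΨdef
  -- derivative of Ψ
  have hΨ : ∀ t ∈ Set.Ici (0:ℝ), HasDerivWithinAt Ψ (E t - S t) (Set.Ici 0) t := by
    intro t ht
    have h1 := hdf t ht
    have h2 := hdg t ht
    have ha : HasDerivWithinAt (fun x => (f x - 1)^2) (2*(f t - 1)*(g t)) (Set.Ici 0) t := by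
      have := (h1.sub_const 1).fun_pow 2
      simpa using this
    have hb : HasDerivWithinAt (fun x => (f x - 1)*(g x))
        ((g t)*(g t) + (f t - 1)*(h t)) (Set.Ici 0) t := (h1.sub_const 1).mul h2
    have hcsq : HasDerivWithinAt (fun x => (g x)^2) (2*(g t)*(h t)) (Set.Ici 0) t := by
      have := h2.fun_pow 2
      simpa using this
    have hfull := ((ha.const_mul (-(Real.sqrt 2))).sub (hb.const_mul 2)).sub
      (hcsq.const_mul (Real.sqrt 2))
    convert hfull using 1
    · rfl
    · rfl
    · rw [hΨdef]; funext x; simp only [Pi.sub_apply]; ring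
    · show (f t - 1)^2 + (h t)^2 - ((f t - 1) + Real.sqrt 2 * g t + h t)^2 = _
      linear_combination (-(g t)^2) * hs2
  have hcE : ContinuousOn E (Set.Ici 0) :=
    ((hcf.sub continuousOn_const).pow 2).add (hch.pow 2)
  have hcS : ContinuousOn S (Set.Ici 0) :=
    (((hcf.sub continuousOn_const).add (continuousOn_const.mul hcg)).add hch).pow 2
  have hcD : ContinuousOn (fun t => E t - S t) (Set.Ici 0) := hcE.sub hcS
  have hΨ0 : Ψ 0 = -(Real.sqrt 2) := by
    simp only [hΨdef, h0, h0']
    ring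
  -- key finite-interval estimate
  have key : ∀ T, 0 ≤ T → Real.sqrt 2 + Ψ T ≤ ∫ t in (0:ℝ)..T, E t := by
    intro T hT
    have hsub : Set.uIcc (0:ℝ) T ⊆ Set.Ici 0 := by
      rw [Set.uIcc_of_le hT]; exact fun x hx => hx.1
    have hEi : IntervalIntegrable E volume 0 T := (hcE.mono hsub).intervalIntegrable
    have hSi : IntervalIntegrable S volume 0 T := (hcS.mono hsub).intervalIntegrable
    have hDint : ∫ t in (0:ℝ)..T, (E t - S t) = Ψ T - Ψ 0 := ftc_Ici hΨ hcD le_rfl hT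
    have hsplit : ∫ t in (0:ℝ)..T, (E t - S t)
        = (∫ t in (0:ℝ)..T, E t) - ∫ t in (0:ℝ)..T, S t :=
      intervalIntegral.integral_sub hEi hSi
    have hSnn : 0 ≤ ∫ t in (0:ℝ)..T, S t :=
      intervalIntegral.integral_nonneg hT (fun x _ => sq_nonneg _)
    rw [hΨ0] at hDint
    linarith [hDint, hsplit.symm.trans hDint]
  -- ε-approximation
  have main : ∀ ε : ℝ, 0 < ε → ENNReal.ofReal (Real.sqrt 2 - ε) ≤
      ∫⁻ t in Set.Ioi (0:ℝ), ENNReal.ofReal (E t) := by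
    intro ε hε
    set δ : ℝ := min 1 (ε/6) with hδdef
    have hδ : 0 < δ := lt_min one_pos (by linarith)
    have hδ1 : δ ≤ 1 := min_le_left _ _
    have hδε : 6*δ ≤ ε := by have := min_le_right 1 (ε/6); linarith
    obtain ⟨N, hN⟩ := Metric.tendsto_atTop.mp hlim δ hδ
    obtain ⟨T, hTA, hgT⟩ := small_deriv hdf hcg hlim hδ (le_max_left 0 N)
    have hT0 : (0:ℝ) ≤ T := le_trans (le_max_left 0 N) hTA
    have hfT : |f T - 1| ≤ δ := by
      have := hN T (le_trans (le_max_right 0 N) hTA)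
      rw [Real.dist_eq] at this; linarith
    have hΨT : -ε ≤ Ψ T := by
      simp only [hΨdef]
      obtain ⟨hu1, hu2⟩ := abs_le.mp hfT
      obtain ⟨hg1', hg2'⟩ := abs_le.mp hgT
      nlinarith [sq_nonneg (f T - 1 + g T), sq_nonneg (f T - 1 - g T),
        sq_nonneg (f T - 1), sq_nonneg (g T), mul_nonneg hδ.le hδ.le]
    have hlow : Real.sqrt 2 - ε ≤ ∫ t in (0:ℝ)..T, E t := by
      have := key T hT0
      linarith
    have hInt : IntegrableOn E (Set.Ioc 0 T) := by
      have : IntegrableOn E (Set.Icc 0 T) :=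
        (hcE.mono (fun x hx => hx.1)).integrableOn_compact isCompact_Icc
      exact this.mono_set Set.Ioc_subset_Icc_self
    have heq : ENNReal.ofReal (∫ t in Set.Ioc (0:ℝ) T, E t)
        = ∫⁻ t in Set.Ioc (0:ℝ) T, ENNReal.ofReal (E t) :=
      ofReal_integral_eq_lintegral_ofReal hInt
        (Filter.Eventually.of_forall (fun t => add_nonneg (sq_nonneg _) (sq_nonneg _)))
    calc ENNReal.ofReal (Real.sqrt 2 - ε)
        ≤ ENNReal.ofReal (∫ t in Set.Ioc (0:ℝ) T, E t) := by
          apply ENNReal.ofReal_le_ofReal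
          rwa [← intervalIntegral.integral_of_le hT0]
      _ = ∫⁻ t in Set.Ioc (0:ℝ) T, ENNReal.ofReal (E t) := heq
      _ ≤ ∫⁻ t in Set.Ioi (0:ℝ), ENNReal.ofReal (E t) :=
          lintegral_mono_set Set.Ioc_subset_Ioi_self
  -- conclude
  by_contra hcon
  push_neg at hcon
  have hlt : (∫⁻ t in Set.Ioi (0:ℝ), ENNReal.ofReal (E t)) < ENNReal.ofReal (Real.sqrt 2) :=
    hcon
  have hne : (∫⁻ t in Set.Ioi (0:ℝ), ENNReal.ofReal (E t)) ≠ ⊤ := hlt.ne_top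
  set r : ℝ := (∫⁻ t in Set.Ioi (0:ℝ), ENNReal.ofReal (E t)).toReal with hr
  have hrlt : r < Real.sqrt 2 := by
    have := ENNReal.toReal_strict_mono (by simp) hlt
    rwa [ENNReal.toReal_ofReal hs2nn] at this
  have hε : 0 < (Real.sqrt 2 - r)/2 := by linarith
  have := main _ hε
  rw [show ∫⁻ t in Set.Ioi (0:ℝ), ENNReal.ofReal (E t)
      = ENNReal.ofReal r from (ENNReal.ofReal_toReal hne).symm] at this
  have hrnn : 0 ≤ r := ENNReal.toReal_nonneg
  have := (ENNReal.ofReal_le_ofReal_iff hrnn).mp this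
  linarith
end

section
/- The optimal profile f₀(t) = 1 − √2·exp(−t/√2)·cos(t/√2 − π/4) has transition energy exactly √2, i.e. ∫₀^∞ ((f₀(t)−1)² + (f₀''(t))²) dt = √2. -/
open MeasureTheory

/-- The optimal profile `f₀(t) = 1 − √2·exp(−t/√2)·cos(t/√2 − π/4)`. -/
noncomputable def optProfile : ℝ → ℝ := fun t =>
  1 - Real.sqrt 2 * Real.exp (-t / Real.sqrt 2) * Real.cos (t / Real.sqrt 2 - Real.pi / 4)

lemma sqrt2_pos : (0:ℝ) < Real.sqrt 2 := Real.sqrt_pos.mpr (by norm_num)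

lemma sqrt2_sq : Real.sqrt 2 * Real.sqrt 2 = 2 := Real.mul_self_sqrt (by norm_num)

lemma one_div_sqrt2 : (1:ℝ) / Real.sqrt 2 = Real.sqrt 2 / 2 := by
  rw [div_eq_div_iff (ne_of_gt sqrt2_pos) (by norm_num : (2:ℝ) ≠ 0), one_mul, sqrt2_sq]

private lemma hexp_deriv (t : ℝ) : HasDerivAt (fun t : ℝ => Real.exp (-t / Real.sqrt 2))
    (-(Real.sqrt 2 / 2) * Real.exp (-t / Real.sqrt 2)) t := by
  have h1 : HasDerivAt (fun t : ℝ => -t / Real.sqrt 2) (-(1 / Real.sqrt 2)) t := by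
    simpa [neg_div] using (hasDerivAt_neg t).div_const (Real.sqrt 2)
  have := h1.exp
  rw [one_div_sqrt2] at this
  simpa [mul_comm] using this

private lemma harg_deriv (t : ℝ) :
    HasDerivAt (fun t : ℝ => t / Real.sqrt 2 - Real.pi / 4) (Real.sqrt 2 / 2) t := by
  have := ((hasDerivAt_id t).div_const (Real.sqrt 2)).sub_const (Real.pi / 4)
  rwa [one_div_sqrt2] at this

/-- First derivative of the optimal profile. -/
lemma optProfile_hasDerivAt (t : ℝ) :
    HasDerivAt optProfile
      (Real.exp (-t / Real.sqrt 2) *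
        (Real.cos (t / Real.sqrt 2 - Real.pi / 4) + Real.sin (t / Real.sqrt 2 - Real.pi / 4))) t := by
  have hcos : HasDerivAt (fun t : ℝ => Real.cos (t / Real.sqrt 2 - Real.pi / 4))
      (-Real.sin (t / Real.sqrt 2 - Real.pi / 4) * (Real.sqrt 2 / 2)) t := by
    simpa using (harg_deriv t).cos
  have h := (((hexp_deriv t).mul hcos).const_mul (Real.sqrt 2)).const_sub 1
  have heq : optProfile = fun x : ℝ =>
      1 - Real.sqrt 2 * (Real.exp (-x / Real.sqrt 2) * Real.cos (x / Real.sqrt 2 - Real.pi / 4)) := by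
    funext x; simp [optProfile, mul_assoc]
  rw [heq]
  refine h.congr_deriv ?_
  symm
  have h2 := sqrt2_sq
  linear_combination (-(Real.exp (-t / Real.sqrt 2) *
    (Real.cos (t / Real.sqrt 2 - Real.pi / 4) + Real.sin (t / Real.sqrt 2 - Real.pi / 4))) / 2) * h2

/-- The first derivative as a function. -/
noncomputable def optProfile' : ℝ → ℝ := fun t =>
  Real.exp (-t / Real.sqrt 2) *
    (Real.cos (t / Real.sqrt 2 - Real.pi / 4) + Real.sin (t / Real.sqrt 2 - Real.pi / 4))

lemma deriv_optProfile : deriv optProfile = optProfile' := by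
  funext t
  exact (optProfile_hasDerivAt t).deriv

/-- Second derivative of the optimal profile. -/
lemma optProfile'_hasDerivAt (t : ℝ) :
    HasDerivAt optProfile'
      (-(Real.sqrt 2) * Real.exp (-t / Real.sqrt 2) * Real.sin (t / Real.sqrt 2 - Real.pi / 4)) t := by
  have hcos : HasDerivAt (fun t : ℝ => Real.cos (t / Real.sqrt 2 - Real.pi / 4))
      (-Real.sin (t / Real.sqrt 2 - Real.pi / 4) * (Real.sqrt 2 / 2)) t := by
    simpa using (harg_deriv t).cos
  have hsin : HasDerivAt (fun t : ℝ => Real.sin (t / Real.sqrt 2 - Real.pi / 4))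
      (Real.cos (t / Real.sqrt 2 - Real.pi / 4) * (Real.sqrt 2 / 2)) t := by
    simpa using (harg_deriv t).sin
  have h := (hexp_deriv t).mul (hcos.add hsin)
  refine h.congr_deriv ?_
  simp only [Pi.add_apply]
  ring

lemma deriv_deriv_optProfile (t : ℝ) :
    deriv (deriv optProfile) t =
      -(Real.sqrt 2) * Real.exp (-t / Real.sqrt 2) * Real.sin (t / Real.sqrt 2 - Real.pi / 4) := by
  rw [deriv_optProfile]
  exact (optProfile'_hasDerivAt t).deriv

/-- Pointwise value of the energy density. -/
lemma energy_density (t : ℝ) :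
    (optProfile t - 1) ^ 2 + (deriv (deriv optProfile) t) ^ 2 =
      2 * Real.exp (-(Real.sqrt 2) * t) := by
  rw [deriv_deriv_optProfile]
  have h2 := sqrt2_sq
  have hpyth : Real.sin (t / Real.sqrt 2 - Real.pi / 4) ^ 2 +
      Real.cos (t / Real.sqrt 2 - Real.pi / 4) ^ 2 = 1 := Real.sin_sq_add_cos_sq _
  have hs : (Real.sqrt 2) ≠ 0 := ne_of_gt sqrt2_pos
  have hexp : Real.exp (-t / Real.sqrt 2) * Real.exp (-t / Real.sqrt 2) =
      Real.exp (-(Real.sqrt 2) * t) := by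
    rw [← Real.exp_add]
    congr 1
    field_simp
    rw [Real.sq_sqrt (by norm_num : (0:ℝ) ≤ 2)]
    ring
  have hval : optProfile t - 1 =
      -(Real.sqrt 2 * Real.exp (-t / Real.sqrt 2) * Real.cos (t / Real.sqrt 2 - Real.pi / 4)) := by
    simp only [optProfile]; ring
  rw [hval]
  set e := Real.exp (-t / Real.sqrt 2)
  set c := Real.cos (t / Real.sqrt 2 - Real.pi / 4)
  set s := Real.sin (t / Real.sqrt 2 - Real.pi / 4)
  linear_combination (e * e * (s ^ 2 + c ^ 2)) * h2 + (2 * e * e) * hpyth + 2 * hexp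

theorem integral_two_exp : (∫ t in Set.Ioi (0:ℝ), 2 * Real.exp (-(Real.sqrt 2) * t)) =
    Real.sqrt 2 := by
  have hb : (0:ℝ) < Real.sqrt 2 := sqrt2_pos
  have h2 := sqrt2_sq
  have hderiv : ∀ x ∈ Set.Ioi (0:ℝ),
      HasDerivAt (fun t : ℝ => -(Real.sqrt 2) * Real.exp (-(Real.sqrt 2) * t))
        (2 * Real.exp (-(Real.sqrt 2) * x)) x := by
    intro x _
    have h1 : HasDerivAt (fun t : ℝ => -(Real.sqrt 2) * t) (-(Real.sqrt 2)) x := by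
      simpa using (hasDerivAt_id x).const_mul (-(Real.sqrt 2))
    have := (h1.exp).const_mul (-(Real.sqrt 2))
    refine this.congr_deriv ?_
    symm
    linear_combination (-Real.exp (-(Real.sqrt 2) * x)) * h2
  have hint : IntegrableOn (fun x : ℝ => 2 * Real.exp (-(Real.sqrt 2) * x)) (Set.Ioi 0) := by
    have := (exp_neg_integrableOn_Ioi 0 hb).const_mul (2:ℝ)
    simpa [neg_mul, IntegrableOn] using this
  have htend : Filter.Tendsto (fun t : ℝ => -(Real.sqrt 2) * Real.exp (-(Real.sqrt 2) * t))
      Filter.atTop (nhds 0) := by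
    have h1 : Filter.Tendsto (fun t : ℝ => Real.sqrt 2 * t) Filter.atTop Filter.atTop :=
      Filter.Tendsto.const_mul_atTop hb Filter.tendsto_id
    have h3 := Real.tendsto_exp_neg_atTop_nhds_zero.comp h1
    have h4 : Filter.Tendsto (fun t : ℝ => Real.exp (-(Real.sqrt 2) * t))
        Filter.atTop (nhds 0) := by
      simpa only [Function.comp_def, neg_mul] using h3
    simpa using h4.const_mul (-(Real.sqrt 2))
  have hcont : ContinuousWithinAt (fun t : ℝ => -(Real.sqrt 2) * Real.exp (-(Real.sqrt 2) * t))
      (Set.Ici 0) 0 :=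
    Continuous.continuousWithinAt (by continuity)
  have := integral_Ioi_of_hasDerivAt_of_tendsto hcont hderiv hint htend
  rw [this]
  simp

/-- The transition energy of the optimal profile is exactly `√2`:
`∫₀^∞ ((f₀(t)−1)² + (f₀''(t))²) dt = √2`. -/
theorem optProfile_energy :
    (∫ t in Set.Ioi (0 : ℝ),
        ((optProfile t - 1) ^ 2 + (deriv (deriv optProfile) t) ^ 2)) =
      Real.sqrt 2 := by
  rw [show (fun t => (optProfile t - 1) ^ 2 + (deriv (deriv optProfile) t) ^ 2) =
      (fun t => 2 * Real.exp (-(Real.sqrt 2) * t)) from funext energy_density]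
  exact integral_two_exp
end

section
/- Let a < b be real numbers and ε₀ > 0. There exists a constant c₀ > 0 (depending only on a, b, ε₀) such that for every ε ∈ (0, ε₀] and every twice continuously differentiable function v : ℝ → ℝ, one has c₀·ε·∫ₐᵇ (v'(t))² dt ≤ (1/ε)·∫ₐᵇ (v(t))² dt + ε³·∫ₐᵇ (v''(t))² dt. -/
open Set intervalIntegral MeasureTheory

lemma exists_sq_le_avg (g : ℝ → ℝ) (hg : Continuous g) {x y : ℝ} (hxy : x < y) :
    ∃ s ∈ Set.Icc x y, g s * (y - x) ≤ ∫ t in x..y, g t := by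
  obtain ⟨s, hs, hmin⟩ := isCompact_Icc.exists_isMinOn (Set.nonempty_Icc.2 hxy.le)
    hg.continuousOn
  refine ⟨s, hs, ?_⟩
  have := intervalIntegral.integral_mono_on (μ := volume) (f := fun _ => g s) hxy.le
    intervalIntegrable_const (hg.intervalIntegrable x y) (fun t ht => hmin ht)
  simpa [mul_comm] using this

lemma cs_interval (f : ℝ → ℝ) (hf : Continuous f) {x y : ℝ} (hxy : x ≤ y) :
    (∫ t in x..y, |f t|) ^ 2 ≤ (y - x) * ∫ t in x..y, (f t) ^ 2 := by
  rcases eq_or_lt_of_le hxy with rfl | hlt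
  · simp
  set L := y - x with hLdef
  have hL : 0 < L := sub_pos.2 hlt
  set J := ∫ t in x..y, |f t| with hJ
  set Q := ∫ t in x..y, (f t) ^ 2 with hQ
  have hi1 : IntervalIntegrable (fun t => (f t) ^ 2) volume x y :=
    ((hf.pow 2)).intervalIntegrable x y
  have hi2 : IntervalIntegrable (fun t => 2 * (J / L) * |f t|) volume x y :=
    (continuous_const.mul hf.abs).intervalIntegrable x y
  have hptw : ∀ t : ℝ, (f t) ^ 2 - 2 * (J / L) * |f t| + (J / L) ^ 2 = (|f t| - J / L) ^ 2 := by
    intro t; rw [sub_sq, sq_abs]; ring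
  have h1 : (0:ℝ) ≤ ∫ t in x..y, ((f t) ^ 2 - 2 * (J / L) * |f t| + (J / L) ^ 2) := by
    rw [intervalIntegral.integral_congr (g := fun t => (|f t| - J / L) ^ 2)
      (fun t _ => hptw t)]
    exact intervalIntegral.integral_nonneg hxy (fun t _ => sq_nonneg _)
  have h2 : (∫ t in x..y, ((f t) ^ 2 - 2 * (J / L) * |f t| + (J / L) ^ 2))
      = Q - 2 * (J / L) * J + (J / L) ^ 2 * L := by
    rw [intervalIntegral.integral_add (hi1.sub hi2) intervalIntegrable_const,
      intervalIntegral.integral_sub hi1 hi2, intervalIntegral.integral_const_mul,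
      intervalIntegral.integral_const]
    simp [smul_eq_mul, ← hJ, ← hQ, ← hLdef]
    ring
  rw [h2] at h1
  have : Q - J ^ 2 / L ≥ 0 := by
    have e : 2 * (J / L) * J - (J / L) ^ 2 * L = J ^ 2 / L := by field_simp; ring
    nlinarith [h1]
  calc J ^ 2 = (J ^ 2 / L) * L := by field_simp
  _ ≤ Q * L := by nlinarith
  _ = L * Q := mul_comm _ _

lemma abs_intervalIntegral_le (g : ℝ → ℝ) (hg : Continuous g) {u w p q : ℝ}
    (hp : p ∈ Set.Icc u w) (hq : q ∈ Set.Icc u w) :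
    |∫ s in p..q, g s| ≤ ∫ s in u..w, |g s| := by
  have hInt : IntervalIntegrable (fun s => |g s|) volume u w := (hg.abs).intervalIntegrable u w
  rcases le_total p q with h | h
  · calc |∫ s in p..q, g s| ≤ ∫ s in p..q, |g s| :=
        intervalIntegral.abs_integral_le_integral_abs h
    _ ≤ ∫ s in u..w, |g s| := intervalIntegral.integral_mono_interval hp.1 h hq.2
        (ae_of_all _ fun t => abs_nonneg _) hInt
  · rw [intervalIntegral.integral_symm, abs_neg]
    calc |∫ s in q..p, g s| ≤ ∫ s in q..p, |g s| :=
        intervalIntegral.abs_integral_le_integral_abs h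
    _ ≤ ∫ s in u..w, |g s| := intervalIntegral.integral_mono_interval hq.1 h hp.2
        (ae_of_all _ fun t => abs_nonneg _) hInt

lemma deriv_sq_bound (v : ℝ → ℝ) (hv : ContDiff ℝ 2 v) {u w : ℝ} (huw : u < w) :
    ∀ t ∈ Set.Icc u w, (deriv v t) ^ 2 ≤
      128 * (∫ s in u..w, (v s) ^ 2) / (w - u) ^ 3
        + 2 * (w - u) * ∫ s in u..w, (deriv (deriv v) s) ^ 2 := by
  intro t ht
  have hv1 : ContDiff ℝ 1 (deriv v) := by
    have h2 : ContDiff ℝ (1 + 1 : ℕ) v := by exact_mod_cast hv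
    exact (contDiff_succ_iff_deriv.mp (by exact_mod_cast h2)).2.2
  have hvc : Continuous v := hv.continuous
  have hvd : Differentiable ℝ v := hv.differentiable (by norm_num)
  have hv'c : Continuous (deriv v) := hv1.continuous
  have hv'd : Differentiable ℝ (deriv v) := hv1.differentiable (by norm_num)
  have hv''c : Continuous (deriv (deriv v)) := hv1.continuous_deriv le_rfl
  set L := w - u with hLdef
  set A := ∫ s in u..w, (v s) ^ 2 with hA
  set B := ∫ s in u..w, (deriv (deriv v) s) ^ 2 with hB
  clear_value L A B
  have hL : 0 < L := by rw [hLdef]; linarith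
  have hAnn : 0 ≤ A := hA ▸ intervalIntegral.integral_nonneg huw.le fun s _ => sq_nonneg _
  have hBnn : 0 ≤ B := hB ▸ intervalIntegral.integral_nonneg huw.le fun s _ => sq_nonneg _
  have hsqInt : IntervalIntegrable (fun s => (v s) ^ 2) volume u w :=
    (hvc.pow 2).intervalIntegrable u w
  -- point x in first quarter
  obtain ⟨x, hx, hxavg⟩ := exists_sq_le_avg (fun s => (v s) ^ 2) (hvc.pow 2)
    (show u < u + L / 4 by linarith)
  obtain ⟨y, hy, hyavg⟩ := exists_sq_le_avg (fun s => (v s) ^ 2) (hvc.pow 2)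
    (show w - L / 4 < w by linarith)
  have hx2 : (v x) ^ 2 * (L / 4) ≤ A := by
    have hmono : (∫ s in u..(u + L / 4), (v s) ^ 2) ≤ A :=
      hA ▸ intervalIntegral.integral_mono_interval le_rfl (by linarith) (by linarith)
        (ae_of_all _ fun s => sq_nonneg _) hsqInt
    calc (v x) ^ 2 * (L / 4) = (v x) ^ 2 * (u + L / 4 - u) := by ring_nf
    _ ≤ _ := hxavg.trans hmono
  have hy2 : (v y) ^ 2 * (L / 4) ≤ A := by
    have hmono : (∫ s in (w - L / 4)..w, (v s) ^ 2) ≤ A :=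
      hA ▸ intervalIntegral.integral_mono_interval (by linarith) (by linarith) le_rfl
        (ae_of_all _ fun s => sq_nonneg _) hsqInt
    calc (v y) ^ 2 * (L / 4) = (v y) ^ 2 * (w - (w - L / 4)) := by ring_nf
    _ ≤ _ := hyavg.trans hmono
  have hxy : x < y := by
    have h1 : x ≤ u + L / 4 := hx.2
    have h2 : w - L / 4 ≤ y := hy.1
    linarith
  have hxIcc : x ∈ Set.Icc u w := ⟨hx.1, hx.2.trans (by linarith)⟩
  have hyIcc : y ∈ Set.Icc u w := ⟨le_trans (by linarith) hy.1, hy.2⟩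
  have hyx : L / 2 ≤ y - x := by
    have h1 : x ≤ u + L / 4 := hx.2
    have h2 : w - L / 4 ≤ y := hy.1
    linarith
  -- mean value theorem
  obtain ⟨ξ, hξ, hslope⟩ := exists_deriv_eq_slope v hxy hvc.continuousOn
    hvd.differentiableOn
  have hξIcc : ξ ∈ Set.Icc u w := ⟨hxIcc.1.trans hξ.1.le, hξ.2.le.trans hyIcc.2⟩
  -- FTC
  have hftc : ∫ s in ξ..t, deriv (deriv v) s = deriv v t - deriv v ξ :=
    intervalIntegral.integral_deriv_eq_sub (fun s _ => hv'd s)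
      (hv''c.intervalIntegrable _ _)
  set I := ∫ s in ξ..t, deriv (deriv v) s with hI
  clear_value I
  have hIb : |I| ≤ ∫ s in u..w, |deriv (deriv v) s| :=
    hI ▸ abs_intervalIntegral_le _ hv''c hξIcc ht
  have hI2 : I ^ 2 ≤ L * B := by
    calc I ^ 2 = |I| ^ 2 := (sq_abs I).symm
    _ ≤ (∫ s in u..w, |deriv (deriv v) s|) ^ 2 := by
        have h0 : 0 ≤ |I| := abs_nonneg _
        nlinarith
    _ ≤ L * B := by rw [hLdef, hB]; exact cs_interval _ hv''c huw.le
  have hteq : deriv v t = deriv v ξ + I := by linarith [hftc]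
  -- slope bound
  have hne : ((y - x) ^ 2 : ℝ) ≠ 0 := pow_ne_zero _ (sub_ne_zero.2 hxy.ne')
  have hs2 : (deriv v ξ) ^ 2 * (y - x) ^ 2 = (v y - v x) ^ 2 := by
    rw [hslope, div_pow, div_mul_cancel₀ _ hne]
  have hξsq : (deriv v ξ) ^ 2 * L ^ 3 ≤ 64 * A := by
    have hq : L ^ 2 / 4 ≤ (y - x) ^ 2 := by nlinarith
    have h4 : (deriv v ξ) ^ 2 * (L ^ 2 / 4) ≤ (v y - v x) ^ 2 :=
      hs2 ▸ mul_le_mul_of_nonneg_left hq (sq_nonneg _)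
    have h5 : (deriv v ξ) ^ 2 * (L ^ 2 / 4) * L ≤ (v y - v x) ^ 2 * L :=
      mul_le_mul_of_nonneg_right h4 hL.le
    have h6 : (v y - v x) ^ 2 * L ≤ 2 * ((v x) ^ 2 * L) + 2 * ((v y) ^ 2 * L) := by
      nlinarith [mul_nonneg (sq_nonneg (v x + v y)) hL.le]
    have h7 : (v x) ^ 2 * L ≤ 4 * A := by linarith
    have h7' : (v y) ^ 2 * L ≤ 4 * A := by linarith
    have h8 : (deriv v ξ) ^ 2 * L ^ 3 = 4 * ((deriv v ξ) ^ 2 * (L ^ 2 / 4) * L) := by ring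
    linarith
  -- combine
  have hL3 : (0:ℝ) < L ^ 3 := by positivity
  have hI2L : I ^ 2 * L ^ 3 ≤ L * B * L ^ 3 := mul_le_mul_of_nonneg_right hI2 hL3.le
  have hsum : (deriv v ξ + I) ^ 2 * L ^ 3 + (deriv v ξ - I) ^ 2 * L ^ 3
      = 2 * ((deriv v ξ) ^ 2 * L ^ 3) + 2 * (I ^ 2 * L ^ 3) := by ring
  have hpos : 0 ≤ (deriv v ξ - I) ^ 2 * L ^ 3 := mul_nonneg (sq_nonneg _) hL3.le
  have final : (deriv v t) ^ 2 * L ^ 3 ≤ 128 * A + 2 * L * B * L ^ 3 := by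
    rw [hteq]; linarith
  have hdiv : (deriv v t) ^ 2 ≤ (128 * A + 2 * L * B * L ^ 3) / L ^ 3 := by
    rw [le_div_iff₀ hL3]; exact final
  calc (deriv v t) ^ 2 ≤ (128 * A + 2 * L * B * L ^ 3) / L ^ 3 := hdiv
  _ = 128 * A / L ^ 3 + 2 * L * B := by field_simp

lemma val_sq_bound (v : ℝ → ℝ) (hv : ContDiff ℝ 2 v) {u w : ℝ} (huw : u < w) :
    ∀ t ∈ Set.Icc u w, (v t) ^ 2 ≤
      258 * (∫ s in u..w, (v s) ^ 2) / (w - u)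
        + 4 * (w - u) ^ 3 * ∫ s in u..w, (deriv (deriv v) s) ^ 2 := by
  intro t ht
  have hvc : Continuous v := hv.continuous
  have hvd : Differentiable ℝ v := hv.differentiable (by norm_num)
  have hv'c : Continuous (deriv v) := hv.continuous_deriv (by norm_num)
  have hderiv := deriv_sq_bound v hv huw
  set L := w - u with hLdef
  set A := ∫ s in u..w, (v s) ^ 2 with hA
  set B := ∫ s in u..w, (deriv (deriv v) s) ^ 2 with hB
  have hL : 0 < L := sub_pos.2 huw
  have hAnn : 0 ≤ A := intervalIntegral.integral_nonneg huw.le fun s _ => sq_nonneg _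
  have hBnn : 0 ≤ B := intervalIntegral.integral_nonneg huw.le fun s _ => sq_nonneg _
  set P := 128 * A / L ^ 3 + 2 * L * B with hP
  have hPnn : 0 ≤ P := by positivity
  have hsup : ∀ s ∈ Set.Icc u w, |deriv v s| ≤ Real.sqrt P := by
    intro s hs
    have h1 := hderiv s hs
    calc |deriv v s| = Real.sqrt ((deriv v s) ^ 2) := by
          rw [Real.sqrt_sq_eq_abs]
    _ ≤ Real.sqrt P := Real.sqrt_le_sqrt h1
  obtain ⟨x, hx, hxavg⟩ := exists_sq_le_avg (fun s => (v s) ^ 2) (hvc.pow 2) huw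
  have hx2 : (v x) ^ 2 * L ≤ A := hxavg
  have hftc : ∫ s in x..t, deriv v s = v t - v x :=
    intervalIntegral.integral_deriv_eq_sub (fun s _ => hvd s)
      (hv'c.intervalIntegrable _ _)
  have hd : |v t - v x| ≤ Real.sqrt P * L := by
    rw [← hftc]
    have hb : ∀ s ∈ Set.uIoc x t, ‖deriv v s‖ ≤ Real.sqrt P := by
      intro s hs
      exact hsup s (Set.uIcc_subset_Icc hx ht (Set.uIoc_subset_uIcc hs))
    have := intervalIntegral.norm_integral_le_of_norm_le_const hb
    have habs : |t - x| ≤ L := by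
      rw [abs_le]; constructor <;> [linarith [ht.1, hx.2]; linarith [ht.2, hx.1]]
    calc |∫ s in x..t, deriv v s| ≤ Real.sqrt P * |t - x| := this
    _ ≤ Real.sqrt P * L := by
        exact mul_le_mul_of_nonneg_left habs (Real.sqrt_nonneg _)
  have hd2 : (v t - v x) ^ 2 ≤ P * L ^ 2 := by
    have h1 : (v t - v x) ^ 2 ≤ (Real.sqrt P * L) ^ 2 := by
      rw [← sq_abs (v t - v x)]
      exact pow_le_pow_left₀ (abs_nonneg _) hd 2
    calc (v t - v x) ^ 2 ≤ (Real.sqrt P * L) ^ 2 := h1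
    _ = P * L ^ 2 := by rw [mul_pow, Real.sq_sqrt hPnn]
  have hPL3 : P * L ^ 3 = 128 * A + 2 * L ^ 4 * B := by
    rw [hP]; field_simp
  have hmulL : (v t) ^ 2 * L ≤ 258 * A + 4 * L ^ 4 * B := by
    have hsq : (v t) ^ 2 ≤ 2 * (v x) ^ 2 + 2 * (v t - v x) ^ 2 := by
      nlinarith [sq_nonneg (v t - 2 * v x + v x), sq_nonneg (v x - (v t - v x))]
    have h1 : (v t) ^ 2 * L ≤ 2 * ((v x) ^ 2 * L) + 2 * ((v t - v x) ^ 2 * L) := by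
      nlinarith
    have h2 : (v t - v x) ^ 2 * L ≤ P * L ^ 3 := by
      nlinarith [hd2, hL, mul_le_mul_of_nonneg_right hd2 hL.le]
    linarith [mul_le_mul_of_nonneg_right hd2 hL.le]
  have hLpos : (0:ℝ) < L := hL
  have hdiv : (v t) ^ 2 ≤ (258 * A + 4 * L ^ 4 * B) / L := by
    rw [le_div_iff₀ hLpos]; exact hmulL
  calc (v t) ^ 2 ≤ (258 * A + 4 * L ^ 4 * B) / L := hdiv
  _ = 258 * A / L + 4 * L ^ 3 * B := by field_simp

lemma abs_mul_le_amgm {L p q : ℝ} (hL : 0 < L) :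
    |p * q| ≤ p ^ 2 / (2 * L) + L * q ^ 2 / 2 := by
  have key : 2 * L * (|p| * |q|) ≤ p ^ 2 + L ^ 2 * q ^ 2 := by
    nlinarith [sq_nonneg (|p| - L * |q|), sq_abs p, sq_abs q, abs_nonneg p, abs_nonneg q]
  have e : p ^ 2 / (2 * L) + L * q ^ 2 / 2 = (p ^ 2 + L ^ 2 * q ^ 2) / (2 * L) := by
    field_simp
  rw [abs_mul, e, le_div_iff₀ (by positivity)]
  linarith

/-- Scaled Gagliardo–Nirenberg interpolation inequality in dimension one
(Proposition 2.1 of the paper, for C² functions): there is `c₀ > 0` such that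
`c₀ ε ∫ₐᵇ (v')² ≤ (1/ε) ∫ₐᵇ v² + ε³ ∫ₐᵇ (v'')²` for all `ε ∈ (0, ε₀]`. -/
theorem scaled_gagliardo_nirenberg_1d (a b : ℝ) (hab : a < b)
    (ε₀ : ℝ) (hε₀ : 0 < ε₀) :
    ∃ c₀ > (0 : ℝ), ∀ ε : ℝ, ε ∈ Set.Ioc (0 : ℝ) ε₀ → ∀ v : ℝ → ℝ, ContDiff ℝ 2 v →
      c₀ * ε * ∫ t in a..b, (deriv v t) ^ 2 ≤
        (1 / ε) * ∫ t in a..b, (v t) ^ 2 +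
          ε ^ 3 * ∫ t in a..b, (deriv (deriv v) t) ^ 2 := by
  set m := min 1 ((b - a) / ε₀) with hm_def
  clear_value m
  have hm : 0 < m := by rw [hm_def]; exact lt_min one_pos (div_pos (by linarith) hε₀)
  have hm1 : m ≤ 1 := by rw [hm_def]; exact min_le_left _ _
  refine ⟨m ^ 2 / 393, by positivity, ?_⟩
  rintro ε ⟨hε1, hε2⟩ v hv
  -- continuity facts
  have hv1 : ContDiff ℝ 1 (deriv v) := by
    have h2 : ContDiff ℝ (1 + 1 : ℕ) v := by exact_mod_cast hv
    exact (contDiff_succ_iff_deriv.mp (by exact_mod_cast h2)).2.2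
  have hvc : Continuous v := hv.continuous
  have hvd : Differentiable ℝ v := hv.differentiable (by norm_num)
  have hv'c : Continuous (deriv v) := hv1.continuous
  have hv'd : Differentiable ℝ (deriv v) := hv1.differentiable (by norm_num)
  have hv''c : Continuous (deriv (deriv v)) := hv1.continuous_deriv le_rfl
  -- the length scale
  set L := ε * m with hL_def
  clear_value L
  have hL : 0 < L := by rw [hL_def]; exact mul_pos hε1 hm
  have hLba : L ≤ b - a := by
    calc L = ε * m := hL_def
    _ ≤ ε₀ * m := mul_le_mul_of_nonneg_right hε2 hm.le
    _ ≤ ε₀ * ((b - a) / ε₀) := by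
        rw [hm_def]; exact mul_le_mul_of_nonneg_left (min_le_right _ _) hε₀.le
    _ = b - a := by field_simp
  set A := ∫ t in a..b, (v t) ^ 2 with hA_def
  set B := ∫ t in a..b, (deriv (deriv v) t) ^ 2 with hB_def
  clear_value A B
  have hAnn : 0 ≤ A := by
    rw [hA_def]; exact intervalIntegral.integral_nonneg hab.le fun s _ => sq_nonneg _
  have hBnn : 0 ≤ B := by
    rw [hB_def]; exact intervalIntegral.integral_nonneg hab.le fun s _ => sq_nonneg _
  -- integration by parts
  have hparts : ∫ t in a..b, (deriv v t * deriv v t + v t * deriv (deriv v) t)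
      = v b * deriv v b - v a * deriv v a :=
    intervalIntegral.integral_deriv_mul_eq_sub_of_hasDerivAt
      hvc.continuousOn hv'c.continuousOn
      (fun x _ => (hvd x).hasDerivAt) (fun x _ => (hv'd x).hasDerivAt)
      (hv'c.intervalIntegrable _ _) (hv''c.intervalIntegrable _ _)
  have hsub : IntervalIntegrable (fun t => v t * deriv (deriv v) t) volume a b :=
    (hvc.mul hv''c).intervalIntegrable _ _
  have hdd : IntervalIntegrable
      (fun t => deriv v t * deriv v t + v t * deriv (deriv v) t) volume a b :=
    ((hv'c.mul hv'c).add (hvc.mul hv''c)).intervalIntegrable _ _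
  have hsplit : (∫ t in a..b, (deriv v t) ^ 2)
      = (v b * deriv v b - v a * deriv v a) - ∫ t in a..b, v t * deriv (deriv v) t := by
    rw [← hparts, ← intervalIntegral.integral_sub hdd hsub]
    exact intervalIntegral.integral_congr fun t _ => by
      show (deriv v t) ^ 2 = _; ring
  -- estimates near b, on [b - L, b]
  have hblt : b - L < b := by linarith
  have halt : a < a + L := by linarith
  have hsqI : IntervalIntegrable (fun s => (v s) ^ 2) volume a b :=
    (hvc.pow 2).intervalIntegrable _ _
  have hsqI'' : IntervalIntegrable (fun s => (deriv (deriv v) s) ^ 2) volume a b :=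
    (hv''c.pow 2).intervalIntegrable _ _
  have hAb : (∫ s in (b - L)..b, (v s) ^ 2) ≤ A := by
    rw [hA_def]
    exact intervalIntegral.integral_mono_interval (by linarith) (by linarith) le_rfl
      (ae_of_all _ fun s => sq_nonneg _) hsqI
  have hBb : (∫ s in (b - L)..b, (deriv (deriv v) s) ^ 2) ≤ B := by
    rw [hB_def]
    exact intervalIntegral.integral_mono_interval (by linarith) (by linarith) le_rfl
      (ae_of_all _ fun s => sq_nonneg _) hsqI''
  have hAa : (∫ s in a..(a + L), (v s) ^ 2) ≤ A := by
    rw [hA_def]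
    exact intervalIntegral.integral_mono_interval le_rfl (by linarith) (by linarith)
      (ae_of_all _ fun s => sq_nonneg _) hsqI
  have hBa : (∫ s in a..(a + L), (deriv (deriv v) s) ^ 2) ≤ B := by
    rw [hB_def]
    exact intervalIntegral.integral_mono_interval le_rfl (by linarith) (by linarith)
      (ae_of_all _ fun s => sq_nonneg _) hsqI''
  have hAbnn : 0 ≤ (∫ s in (b - L)..b, (v s) ^ 2) :=
    intervalIntegral.integral_nonneg (by linarith) fun s _ => sq_nonneg _
  have hAann : 0 ≤ (∫ s in a..(a + L), (v s) ^ 2) :=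
    intervalIntegral.integral_nonneg (by linarith) fun s _ => sq_nonneg _
  have hdb : (deriv v b) ^ 2 ≤ 128 * A / L ^ 3 + 2 * L * B := by
    have h := deriv_sq_bound v hv hblt b ⟨by linarith, le_rfl⟩
    rw [show b - (b - L) = L from by ring] at h
    calc (deriv v b) ^ 2 ≤ _ := h
    _ ≤ 128 * A / L ^ 3 + 2 * L * B := by gcongr
  have hvb : (v b) ^ 2 ≤ 258 * A / L + 4 * L ^ 3 * B := by
    have h := val_sq_bound v hv hblt b ⟨by linarith, le_rfl⟩
    rw [show b - (b - L) = L from by ring] at h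
    calc (v b) ^ 2 ≤ _ := h
    _ ≤ 258 * A / L + 4 * L ^ 3 * B := by gcongr
  have hda : (deriv v a) ^ 2 ≤ 128 * A / L ^ 3 + 2 * L * B := by
    have h := deriv_sq_bound v hv halt a ⟨le_rfl, by linarith⟩
    rw [show a + L - a = L from by ring] at h
    calc (deriv v a) ^ 2 ≤ _ := h
    _ ≤ 128 * A / L ^ 3 + 2 * L * B := by gcongr
  have hva : (v a) ^ 2 ≤ 258 * A / L + 4 * L ^ 3 * B := by
    have h := val_sq_bound v hv halt a ⟨le_rfl, by linarith⟩
    rw [show a + L - a = L from by ring] at h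
    calc (v a) ^ 2 ≤ _ := h
    _ ≤ 258 * A / L + 4 * L ^ 3 * B := by gcongr
  -- boundary products
  have hbd : ∀ p q : ℝ, p ^ 2 ≤ 258 * A / L + 4 * L ^ 3 * B →
      q ^ 2 ≤ 128 * A / L ^ 3 + 2 * L * B →
      |p * q| ≤ 193 * (A / L ^ 2) + 3 * (L ^ 2 * B) := by
    intro p q hp hq
    have h1 := abs_mul_le_amgm (p := p) (q := q) hL
    have e1 : (258 * A / L + 4 * L ^ 3 * B) / (2 * L)
        = 129 * (A / L ^ 2) + 2 * (L ^ 2 * B) := by field_simp; ring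
    have e2 : L * (128 * A / L ^ 3 + 2 * L * B) / 2
        = 64 * (A / L ^ 2) + (L ^ 2 * B) := by field_simp; ring
    have h2 : p ^ 2 / (2 * L) ≤ 129 * (A / L ^ 2) + 2 * (L ^ 2 * B) := by
      rw [← e1]; gcongr
    have h3 : L * q ^ 2 / 2 ≤ 64 * (A / L ^ 2) + (L ^ 2 * B) := by
      rw [← e2]; gcongr
    linarith
  have hPb := hbd (v b) (deriv v b) hvb hdb
  have hPa := hbd (v a) (deriv v a) hva hda
  -- cross term
  have hL2 : (0:ℝ) < L ^ 2 := by positivity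
  have hcross : |∫ t in a..b, v t * deriv (deriv v) t|
      ≤ (1 / 2) * (A / L ^ 2) + (1 / 2) * (L ^ 2 * B) := by
    have h1 : |∫ t in a..b, v t * deriv (deriv v) t|
        ≤ ∫ t in a..b, |v t * deriv (deriv v) t| :=
      intervalIntegral.abs_integral_le_integral_abs hab.le
    have h2 : (∫ t in a..b, |v t * deriv (deriv v) t|)
        ≤ ∫ t in a..b, ((1 / (2 * L ^ 2)) * (v t) ^ 2
            + (L ^ 2 / 2) * (deriv (deriv v) t) ^ 2) := by
      apply intervalIntegral.integral_mono_on hab.le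
        ((hvc.mul hv''c).abs.intervalIntegrable _ _)
        (((continuous_const.mul (hvc.pow 2)).add
          (continuous_const.mul (hv''c.pow 2))).intervalIntegrable _ _)
      intro t _
      have := abs_mul_le_amgm (L := L ^ 2) (p := v t) (q := deriv (deriv v) t) hL2
      calc |v t * deriv (deriv v) t| ≤ _ := this
      _ = (1 / (2 * L ^ 2)) * (v t) ^ 2 + (L ^ 2 / 2) * (deriv (deriv v) t) ^ 2 := by
        field_simp
    have h3 : (∫ t in a..b, ((1 / (2 * L ^ 2)) * (v t) ^ 2
        + (L ^ 2 / 2) * (deriv (deriv v) t) ^ 2))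
        = (1 / (2 * L ^ 2)) * A + (L ^ 2 / 2) * B := by
      rw [intervalIntegral.integral_add (f := fun t => (1 / (2 * L ^ 2)) * (v t) ^ 2)
        (g := fun t => (L ^ 2 / 2) * (deriv (deriv v) t) ^ 2)
        ((continuous_const.mul (hvc.pow 2)).intervalIntegrable _ _)
        ((continuous_const.mul (hv''c.pow 2)).intervalIntegrable _ _)]
      simp only [intervalIntegral.integral_const_mul, ← hA_def, ← hB_def]
    have e : (1 / (2 * L ^ 2)) * A + (L ^ 2 / 2) * B
        = (1 / 2) * (A / L ^ 2) + (1 / 2) * (L ^ 2 * B) := by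
      field_simp
      try ring
    rw [h3, e] at h2
    linarith [h1, h2]
  -- total estimate
  have hItot : (∫ t in a..b, (deriv v t) ^ 2)
      ≤ 387 * (A / L ^ 2) + 7 * (L ^ 2 * B) := by
    have hb1 : v b * deriv v b ≤ |v b * deriv v b| := le_abs_self _
    have hb2 : -(v a * deriv v a) ≤ |v a * deriv v a| := neg_le_abs _
    have hb3 : -(∫ t in a..b, v t * deriv (deriv v) t)
        ≤ |∫ t in a..b, v t * deriv (deriv v) t| := neg_le_abs _
    have hALnn : 0 ≤ A / L ^ 2 := by positivity
    have hLBnn : 0 ≤ L ^ 2 * B := by positivity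
    rw [hsplit]
    linarith
  -- conclusion
  have hεne : ε ≠ 0 := hε1.ne'
  have hmne : m ≠ 0 := hm.ne'
  have e1 : m ^ 2 / 393 * ε * (387 * (A / L ^ 2)) = (387 / 393) * ((1 / ε) * A) := by
    rw [hL_def]; field_simp; try ring
  have e2 : m ^ 2 / 393 * ε * (7 * (L ^ 2 * B)) = (7 * m ^ 4 / 393) * (ε ^ 3 * B) := by
    rw [hL_def]; field_simp; try ring
  have hconst : IntervalIntegrable (fun _ : ℝ => ε ^ 3 * B) volume a b :=
    intervalIntegrable_const
  have hRHS : (∫ t in a..b, ((v t) ^ 2 + ε ^ 3 * B))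
      = A + (b - a) * (ε ^ 3 * B) := by
    rw [intervalIntegral.integral_add hsqI hconst, intervalIntegral.integral_const,
      smul_eq_mul, ← hA_def]
  have hstep : m ^ 2 / 393 * ε * (∫ t in a..b, (deriv v t) ^ 2)
      ≤ m ^ 2 / 393 * ε * (387 * (A / L ^ 2) + 7 * (L ^ 2 * B)) :=
    mul_le_mul_of_nonneg_left hItot (mul_nonneg (by positivity) hε1.le)
  have hAε : 0 ≤ (1 / ε) * A := by positivity
  have hm4m : m ^ 4 ≤ m := by
    calc m ^ 4 = m * m ^ 3 := by ring
    _ ≤ m * 1 := mul_le_mul_of_nonneg_left (pow_le_one₀ hm.le hm1) hm.le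
    _ = m := mul_one m
  have hkey : 7 * m ^ 4 / 393 * ε ≤ b - a := by
    have h1 : 7 * m ^ 4 / 393 ≤ m := by linarith
    calc 7 * m ^ 4 / 393 * ε ≤ m * ε := mul_le_mul_of_nonneg_right h1 hε1.le
    _ = ε * m := mul_comm m ε
    _ ≤ b - a := by rw [← hL_def]; exact hLba
  have hε2B : 0 ≤ ε ^ 2 * B := mul_nonneg (sq_nonneg ε) hBnn
  have hfin2 : (7 * m ^ 4 / 393) * (ε ^ 3 * B) ≤ (b - a) * (ε ^ 2 * B) := by
    calc (7 * m ^ 4 / 393) * (ε ^ 3 * B) = (7 * m ^ 4 / 393 * ε) * (ε ^ 2 * B) := by ring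
    _ ≤ (b - a) * (ε ^ 2 * B) := mul_le_mul_of_nonneg_right hkey hε2B
  calc m ^ 2 / 393 * ε * (∫ t in a..b, (deriv v t) ^ 2)
      ≤ m ^ 2 / 393 * ε * (387 * (A / L ^ 2) + 7 * (L ^ 2 * B)) := hstep
  _ = (387 / 393) * ((1 / ε) * A) + (7 * m ^ 4 / 393) * (ε ^ 3 * B) := by
      rw [mul_add, e1, e2]
  _ ≤ (1 / ε) * A + (b - a) * (ε ^ 2 * B) := by
      have p1 : (387 / 393 : ℝ) * ((1 / ε) * A) ≤ 1 * ((1 / ε) * A) :=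
        mul_le_mul_of_nonneg_right (by norm_num) hAε
      linarith [hfin2]
  _ = 1 / ε * ∫ t in a..b, ((v t) ^ 2 + ε ^ 3 * B) := by
      rw [hRHS]; field_simp; try ring
end

section
/- The optimal profile f₀(t) = 1 − √2·exp(−t/√2)·cos(t/√2 − π/4) exceeds the value 1: there exists t > 0 with f₀(t) > 1 (for instance t = √2·π). -/
/-- The optimal profile overshoots the value `1`: there is `t > 0` with `f₀(t) > 1`. -/
theorem optProfile_exceeds_one : ∃ t > (0 : ℝ), optProfile t > 1 := by
  have h2 : (0:ℝ) < Real.sqrt 2 := Real.sqrt_pos.mpr (by norm_num)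
  refine ⟨Real.sqrt 2 * Real.pi, by positivity, ?_⟩
  have hdiv : Real.sqrt 2 * Real.pi / Real.sqrt 2 = Real.pi := by
    field_simp
  unfold optProfile
  rw [neg_div, hdiv]
  have hcos : Real.cos (Real.pi - Real.pi / 4) = -Real.cos (Real.pi / 4) :=
    Real.cos_pi_sub _
  have : Real.sqrt 2 * Real.exp (-Real.pi) * Real.cos (Real.pi - Real.pi / 4) < 0 := by
    rw [hcos, Real.cos_pi_div_four]
    have : (0:ℝ) < Real.sqrt 2 * Real.exp (-Real.pi) * (Real.sqrt 2 / 2) := by positivity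
    nlinarith
  linarith
end
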